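/- Let Q_j(u) be defined as det(M_{1,…,j})/det(V_{1,…,j}) as in the tRS setting (with q_i(u) = u − p_i, shifts by powers of ħ^{−1/2}, and Vandermonde V). Then Q_n(u) = det(u·I − L), where L is the n×n matrix L_{ij} = ( ∏_{k ≠ j} (ħ^{−1/2}ζ_i − ħ^{1/2}ζ_k) / ∏_{k ≠ i} (ζ_i − ζ_k) ) p_j. -/

import Mathlib

open Finset

noncomputable def Mdet {K : Type*} [Field K] {n : ℕ} (ζ p : Fin n → K) (h : K)
    (j : ℕ) (row : Fin j → Fin n) (u : K) : K :=
  Matrix.det (Matrix.of fun a b : Fin j =>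
    ζ (row a) ^ (b : ℕ) *
      (h ^ (-((j : ℤ) - 1 - 2 * ((b : ℕ) : ℤ))) * u - p (row a)))

noncomputable def Vdet {K : Type*} [Field K] {n : ℕ} (ζ : Fin n → K)
    (j : ℕ) (row : Fin j → Fin n) : K :=
  Matrix.det (Matrix.of fun a b : Fin j => ζ (row a) ^ (b : ℕ))

noncomputable def Qfun {K : Type*} [Field K] {n : ℕ} (ζ p : Fin n → K) (h : K)
    (j : ℕ) (hj : j ≤ n) (u : K) : K :=
  Mdet ζ p h j (fun a => ⟨a, lt_of_lt_of_le a.isLt hj⟩) u /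
    Vdet ζ j (fun a => ⟨a, lt_of_lt_of_le a.isLt hj⟩)

/-- The tRS Lax matrix with t = ħ^{1/2} = h. -/
noncomputable def tRSLax {K : Type*} [Field K] (n : ℕ) (ζ p : Fin n → K) (h : K) :
    Matrix (Fin n) (Fin n) K :=
  Matrix.of fun i j =>
    ((∏ k ∈ univ.erase j, (h⁻¹ * ζ i - h * ζ k)) /
      (∏ k ∈ univ.erase i, (ζ i - ζ k))) * p j

open Polynomial in
lemma interp_aux {K : Type*} [Field K] {n : ℕ} (x : Fin n → K) (hx : Function.Injective x)
    {j : ℕ} (hj : j < n) (t : K) :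
    ∑ b : Fin n, x b ^ j * ∏ k ∈ univ.erase b, ((x b - x k)⁻¹ * (t - x k)) = t ^ j := by
  have h1 : ((X : K[X]) ^ j).degree < (univ : Finset (Fin n)).card := by
    rw [Polynomial.degree_X_pow]
    simp only [Finset.card_univ, Fintype.card_fin]
    exact_mod_cast hj
  have h2 := Lagrange.eq_interpolate (f := (X : K[X]) ^ j) hx.injOn h1
  have h3 := congrArg (Polynomial.eval t) h2
  rw [Lagrange.interpolate_apply] at h3
  simp only [Polynomial.eval_pow, Polynomial.eval_X, Polynomial.eval_finset_sum,
    Polynomial.eval_mul, Polynomial.eval_C, Lagrange.basis, Polynomial.eval_prod,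
    Lagrange.basisDivisor, Polynomial.eval_sub] at h3
  exact h3.symm

/-- Q_n(u) = det(u·I − L). -/
theorem stmt10 {K : Type*} [Field K] (n : ℕ) (ζ p : Fin n → K) (h : K)
    (hζ : Function.Injective ζ) (hζ0 : ∀ i, ζ i ≠ 0) (hh : h ≠ 0) (u : K) :
    Qfun ζ p h n (le_refl n) u
      = (u • (1 : Matrix (Fin n) (Fin n) K) - tRSLax n ζ p h).det := by
  classical
  set x : Fin n → K := fun k => h ^ 2 * ζ k with hxdef
  have hx : Function.Injective x := fun a b hab =>
    hζ (mul_left_cancel₀ (pow_ne_zero 2 hh) hab)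
  set d : Fin n → K := fun i => ∏ k ∈ univ.erase i, (ζ i - ζ k) with hddef
  have hd : ∀ i, d i ≠ 0 := by
    intro i
    refine Finset.prod_ne_zero_iff.mpr fun k hk => sub_ne_zero.mpr fun hE => ?_
    exact (Finset.mem_erase.mp hk).1 (hζ hE).symm
  set e : Fin n → K := fun b => h ^ (2 * (b : ℕ)) * (h ^ (n - 1))⁻¹ with hedef
  set V := Matrix.vandermonde ζ with hVdef
  set Cm := V * Matrix.diagonal e with hCmdef
  set G : Matrix (Fin n) (Fin n) K :=
    Matrix.of fun i b => (∏ k ∈ univ.erase b, (h⁻¹ * ζ i - h * ζ k)) / d b with hGdef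
  set Dp := Matrix.diagonal p with hDpdef
  set Dd := Matrix.diagonal d with hDddef
  set L := tRSLax n ζ p h with hLdef
  -- V has nonzero determinant
  have hVne : V.det ≠ 0 := Matrix.det_vandermonde_ne_zero_iff.mpr hζ
  -- determinant of Cm
  have hprod_e : ∏ b : Fin n, e b = 1 := by
    have h1 : ∏ b : Fin n, e b = (∏ b : Fin n, h ^ (2 * (b : ℕ))) * ((h ^ (n - 1))⁻¹) ^ n := by
      rw [hedef, Finset.prod_mul_distrib, Finset.prod_const, Finset.card_univ, Fintype.card_fin]
    have h2 : (∏ b : Fin n, h ^ (2 * (b : ℕ))) = h ^ (n * (n - 1)) := by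
      rw [Finset.prod_pow_eq_pow_sum]
      congr 1
      rw [Fin.sum_univ_eq_sum_range (fun i => 2 * i), ← Finset.mul_sum,
        mul_comm 2 (∑ i ∈ Finset.range n, i), Finset.sum_range_id_mul_two]
    have h3 : ((h ^ (n - 1))⁻¹) ^ n = (h ^ (n * (n - 1)))⁻¹ := by
      rw [inv_pow, ← pow_mul, mul_comm (n - 1) n]
    rw [h1, h2, h3, mul_inv_cancel₀ (pow_ne_zero _ hh)]
  have hCdet : Cm.det = V.det := by
    rw [hCmdef, Matrix.det_mul, Matrix.det_diagonal, hprod_e, mul_one]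
  -- G * Cm = V
  have hGC : G * Cm = V := by
    ext i j
    have hcmul : ∀ b, Cm b j = ζ b ^ (j : ℕ) * e j := by
      intro b
      rw [hCmdef, Matrix.mul_diagonal, hVdef, Matrix.vandermonde_apply]
    have hsum : ∀ b : Fin n,
        G i b * Cm b j
          = x b ^ (j : ℕ) * ∏ k ∈ univ.erase b, ((x b - x k)⁻¹ * (ζ i - x k)) := by
      intro b
      have hcard : (univ.erase b).card = n - 1 := by
        rw [Finset.card_erase_of_mem (Finset.mem_univ b), Finset.card_univ, Fintype.card_fin]
      have hfac : ∀ k ∈ univ.erase b,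
          (x b - x k)⁻¹ * (ζ i - x k) = h⁻¹ * ((ζ b - ζ k)⁻¹ * (h⁻¹ * ζ i - h * ζ k)) := by
        intro k hk
        have hzk : ζ b - ζ k ≠ 0 :=
          sub_ne_zero.mpr fun hE => (Finset.mem_erase.mp hk).1 (hζ hE).symm
        rw [hxdef]
        have hxbk : h ^ 2 * ζ b - h ^ 2 * ζ k = h ^ 2 * (ζ b - ζ k) := by ring
        rw [hxbk, mul_inv]
        field_simp
      have hxbj : x b ^ (j : ℕ) = h ^ (2 * (j : ℕ)) * ζ b ^ (j : ℕ) := by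
        rw [hxdef]; rw [mul_pow, ← pow_mul]
      rw [Finset.prod_congr rfl hfac, Finset.prod_mul_distrib, Finset.prod_const, hcard,
        Finset.prod_mul_distrib]
      simp only [Finset.prod_inv_distrib, inv_pow, hGdef, Matrix.of_apply, hcmul b,
        hddef, hedef, division_def, hxbj]
      ring
    rw [Matrix.mul_apply, Finset.sum_congr rfl fun b _ => hsum b,
      interp_aux x hx j.isLt (ζ i)]
    simp [hVdef, Matrix.vandermonde]
  -- det G = 1
  have hGdet : G.det = 1 := by
    have := congrArg Matrix.det hGC
    rw [Matrix.det_mul, hCdet] at this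
    exact mul_right_cancel₀ hVne (by rw [this, one_mul])
  -- Mdet equals det (u • Cm - Dp * V)
  have hM : Mdet ζ p h n (fun a => ⟨a, lt_of_lt_of_le a.isLt (le_refl n)⟩) u
      = (u • Cm - Dp * V).det := by
    rw [Mdet]
    congr 1
    ext a b
    have hn1 : 1 ≤ n := b.pos
    have hzpow : h ^ (-((n : ℤ) - 1 - 2 * ((b : ℕ) : ℤ))) = e b := by
      have hexp : (-((n : ℤ) - 1 - 2 * ((b : ℕ) : ℤ)))
          = ((2 * (b : ℕ) : ℕ) : ℤ) - ((n - 1 : ℕ) : ℤ) := by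
        push_cast [Nat.cast_sub hn1]
        ring
      rw [hexp, zpow_sub₀ hh, zpow_natCast, zpow_natCast, hedef, division_def]
    simp only [Matrix.of_apply, Matrix.sub_apply, Matrix.smul_apply, smul_eq_mul,
      hCmdef, hDpdef, Matrix.mul_diagonal, Matrix.diagonal_mul, hVdef,
      Matrix.vandermonde_apply, Fin.eta, hzpow]
    ring
  -- Vdet equals V.det
  have hVd : Vdet ζ n (fun a => ⟨a, lt_of_lt_of_le a.isLt (le_refl n)⟩) = V.det := by
    rw [Vdet]
    rfl
  -- first key identity : G * (u • Cm - Dp * V) = (u • 1 - G * Dp) * V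
  have key1 : G * (u • Cm - Dp * V) = (u • (1 : Matrix (Fin n) (Fin n) K) - G * Dp) * V := by
    rw [Matrix.mul_sub, Matrix.sub_mul, Matrix.mul_smul, hGC, Matrix.smul_mul,
      Matrix.one_mul, Matrix.mul_assoc]
  -- second key identity : Dd * (u • 1 - L) = (u • 1 - G * Dp) * Dd
  have key2 : Dd * (u • (1 : Matrix (Fin n) (Fin n) K) - L)
      = (u • (1 : Matrix (Fin n) (Fin n) K) - G * Dp) * Dd := by
    have hDL : Dd * L = (G * Dp) * Dd := by
      ext i b
      rw [hDddef, Matrix.diagonal_mul, Matrix.mul_diagonal, Matrix.mul_diagonal]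
      simp only [hLdef, tRSLax, Matrix.of_apply, hGdef, hddef]
      have hdi : (∏ k ∈ univ.erase i, (ζ i - ζ k)) ≠ 0 := by simpa [hddef] using hd i
      have hdb : (∏ k ∈ univ.erase b, (ζ b - ζ k)) ≠ 0 := by simpa [hddef] using hd b
      field_simp
    rw [Matrix.mul_sub, Matrix.sub_mul, hDL]
    congr 1
    rw [Matrix.mul_smul, Matrix.smul_mul, Matrix.mul_one, Matrix.one_mul]
  -- conclude
  have hDdne : Dd.det ≠ 0 := by
    rw [hDddef, Matrix.det_diagonal]
    exact Finset.prod_ne_zero_iff.mpr fun i _ => hd i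
  have step1 : (u • (1 : Matrix (Fin n) (Fin n) K) - L).det
      = (u • (1 : Matrix (Fin n) (Fin n) K) - G * Dp).det := by
    have := congrArg Matrix.det key2
    rw [Matrix.det_mul, Matrix.det_mul] at this
    exact mul_left_cancel₀ hDdne (by rw [this]; ring)
  have step2 : (u • (1 : Matrix (Fin n) (Fin n) K) - G * Dp).det
      = (u • Cm - Dp * V).det / V.det := by
    have := congrArg Matrix.det key1
    rw [Matrix.det_mul, Matrix.det_mul, hGdet, one_mul] at this
    rw [this, mul_div_cancel_right₀ _ hVne]
  rw [Qfun, hM, hVd, ← step2, ← step1]
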